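/- Let the parameters of H(m,1,n) satisfy the restrictions, let λ be an m-partition of n, and let ρ_λ : H(m,1,n) → End(U_λ) be the representation V_λ. Then for every standard m-tableau X of shape λ and every i = 1, …, n, the Jucys–Murphy element acts by ρ_λ(J_i)(𝒳_X) = c(X|i)·𝒳_X. -/

import Mathlib

open Classical

noncomputable section

namespace CHA

/-- Generator type for the cyclotomic Hecke algebra `H(m,1,n)`:
`Sum.inl ()` is `τ` and `Sum.inr i` (for `i : Fin (n-1)`) is the generator `σ_{i+1}`
(1-based), i.e. the one exchanging the 0-based positions `i` and `i+1`. -/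
abbrev Gen (n : ℕ) := Unit ⊕ Fin (n - 1)

/-- The free-algebra lift of the generator `τ`. -/
def fτ (n : ℕ) : FreeAlgebra ℂ (Gen n) := FreeAlgebra.ι ℂ (Sum.inl ())

/-- The free-algebra lift of the generator `σ_{i+1}` (1-based numbering). -/
def fσ (n : ℕ) (i : Fin (n - 1)) : FreeAlgebra ℂ (Gen n) := FreeAlgebra.ι ℂ (Sum.inr i)

/-- The defining relations of the cyclotomic Hecke algebra `H(m,1,n)`. -/
inductive Rel (m n : ℕ) (q : ℂ) (v : Fin m → ℂ) :
    FreeAlgebra ℂ (Gen n) → FreeAlgebra ℂ (Gen n) → Prop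
  | braid (i j : Fin (n - 1)) (hij : (i : ℕ) + 1 = (j : ℕ)) :
      Rel m n q v (fσ n i * fσ n j * fσ n i) (fσ n j * fσ n i * fσ n j)
  | comm (i j : Fin (n - 1)) (hij : (i : ℕ) + 1 < (j : ℕ)) :
      Rel m n q v (fσ n i * fσ n j) (fσ n j * fσ n i)
  | quad (i : Fin (n - 1)) :
      Rel m n q v (fσ n i * fσ n i) ((q - q⁻¹) • fσ n i + 1)
  | reflection (i : Fin (n - 1)) (hi : (i : ℕ) = 0) :
      Rel m n q v (fτ n * fσ n i * (fτ n * fσ n i)) (fσ n i * fτ n * (fσ n i * fτ n))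
  | taucomm (i : Fin (n - 1)) (hi : 0 < (i : ℕ)) :
      Rel m n q v (fτ n * fσ n i) (fσ n i * fτ n)
  | cyclotomic :
      Rel m n q v ((List.ofFn fun k : Fin m =>
        fτ n - algebraMap ℂ (FreeAlgebra ℂ (Gen n)) (v k)).prod) 0

/-- The cyclotomic Hecke algebra `H(m,1,n)` with parameters `q, v_1, …, v_m`. -/
abbrev Hecke (m n : ℕ) (q : ℂ) (v : Fin m → ℂ) := RingQuot (Rel m n q v)

/-- The generator `τ` of `H(m,1,n)`. -/
def τgen (m n : ℕ) (q : ℂ) (v : Fin m → ℂ) : Hecke m n q v :=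
  RingQuot.mkAlgHom ℂ (Rel m n q v) (fτ n)

/-- The generator `σ_{i+1}` of `H(m,1,n)`, for `i : Fin (n-1)` (so `σgen _ _ _ _ i`
is the paper's `σ_{i+1}` in 1-based numbering). -/
def σgen (m n : ℕ) (q : ℂ) (v : Fin m → ℂ) (i : Fin (n - 1)) : Hecke m n q v :=
  RingQuot.mkAlgHom ℂ (Rel m n q v) (fσ n i)

/-- `σN m n q v k` is `σgen` at `k` if `k < n-1`, and `1` otherwise (junk value). -/
def σN (m n : ℕ) (q : ℂ) (v : Fin m → ℂ) (k : ℕ) : Hecke m n q v :=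
  if h : k < n - 1 then σgen m n q v ⟨k, h⟩ else 1

/-- Jucys–Murphy elements, 0-based: `JMn 0 = τ`, `JMn (k+1) = σ_{k+1} (JMn k) σ_{k+1}`. -/
def JMn (m n : ℕ) (q : ℂ) (v : Fin m → ℂ) : ℕ → Hecke m n q v
  | 0 => τgen m n q v
  | k + 1 => σN m n q v k * JMn m n q v k * σN m n q v k

/-- The Jucys–Murphy element `J_{i+1}` (1-based) of `H(m,1,n)`, for `i : Fin n`. -/
def JM (m n : ℕ) (q : ℂ) (v : Fin m → ℂ) (i : Fin n) : Hecke m n q v :=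
  JMn m n q v i.val

/-- The restrictions on the parameters `q, v_1, …, v_m` of `H(m,1,n)`:
`1 + q² + ⋯ + q^{2N} ≠ 0` for `1 ≤ N < n`; `q^{2i} v_j ≠ v_k` for `j ≠ k`, `−n < i < n`;
`v_j ≠ 0`. -/
def Restrictions (m n : ℕ) (q : ℂ) (v : Fin m → ℂ) : Prop :=
  (∀ N : ℕ, 1 ≤ N → N < n → (∑ j ∈ Finset.range (N + 1), q ^ (2 * j)) ≠ 0) ∧
  (∀ j k : Fin m, j ≠ k → ∀ i : ℤ, -(n : ℤ) < i → i < (n : ℤ) → q ^ (2 * i) * v j ≠ v k) ∧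
  (∀ j, v j ≠ 0)

/-- An `m`-node: a component index `k : Fin m` together with a (0-based) cell
`(row, column)` of a Young diagram. -/
abbrev MNode (m : ℕ) := Fin m × ℕ × ℕ

/-- `pos : Fin n → MNode m` describes a standard `m`-tableau of shape
`μ : Fin m → YoungDiagram` when: every value is a cell of the corresponding diagram;
`pos` is injective; and entries increase (left to right) along rows and down columns,
i.e. if `pos j` is in the same component and row (resp. column) as `pos i` and strictly
to the right (resp. below), then `i < j`.  Here `pos i` is the `m`-node containing the
entry `i+1` (1-based). -/
def IsStdTabFun (m n : ℕ) (μ : Fin m → YoungDiagram) (pos : Fin n → MNode m) : Prop :=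
  (∀ i, ((pos i).2.1, (pos i).2.2) ∈ μ (pos i).1) ∧
  Function.Injective pos ∧
  (∀ i j : Fin n, (pos i).1 = (pos j).1 → (pos i).2.1 = (pos j).2.1 →
      (pos i).2.2 < (pos j).2.2 → i < j) ∧
  (∀ i j : Fin n, (pos i).1 = (pos j).1 → (pos i).2.2 = (pos j).2.2 →
      (pos i).2.1 < (pos j).2.1 → i < j)

/-- The type of standard `m`-tableaux of shape `μ` with entries `1, …, n`. -/
def StdTab (m n : ℕ) (μ : Fin m → YoungDiagram) :=
  { pos : Fin n → MNode m // IsStdTabFun m n μ pos }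

/-- The content `c(X|i) = v_k q^{2(s−r)}` of the entry `i` of a standard `m`-tableau,
where `i` sits in row `r`, column `s` of the `k`-th diagram. -/
def content {m n : ℕ} (q : ℂ) (v : Fin m → ℂ) {μ : Fin m → YoungDiagram}
    (X : StdTab m n μ) (i : Fin n) : ℂ :=
  v (X.val i).1 * q ^ (2 * (((X.val i).2.2 : ℤ) - ((X.val i).2.1 : ℤ)))
/-- The underlying space `U_λ` of the representation `V_λ`: the vector space with basis
`{𝒳_X}` indexed by the standard `m`-tableaux of shape `μ`. -/
abbrev Uspace (m n : ℕ) (μ : Fin m → YoungDiagram) := StdTab m n μ →₀ ℂ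

/-- The operator `T = ρ_λ(τ)`: `𝒳_X ↦ c(X|1)·𝒳_X`. -/
def tauOp (m n : ℕ) (q : ℂ) (v : Fin m → ℂ) (μ : Fin m → YoungDiagram) :
    Module.End ℂ (Uspace m n μ) :=
  Finsupp.lsum ℂ fun X => LinearMap.toSpanSingleton ℂ (Uspace m n μ)
    ((if h : 0 < n then content q v X ⟨0, h⟩ else 0) • Finsupp.single X 1)

/-- The filling obtained from `pos` by exchanging the entries `i+1` and `i+2`
(1-based), i.e. precomposing with the transposition of the 0-based indices
`i.val` and `i.val + 1`. -/
def swapFun {m : ℕ} (n : ℕ) (pos : Fin n → MNode m) (i : Fin (n - 1)) :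
    Fin n → MNode m :=
  pos ∘ (Equiv.swap (⟨i.val, by have := i.isLt; omega⟩ : Fin n)
    ⟨i.val + 1, by have := i.isLt; omega⟩)

/-- `c(X|i+1)` (1-based), for `i : Fin (n-1)`. -/
def cLow {m n : ℕ} (q : ℂ) (v : Fin m → ℂ) {μ : Fin m → YoungDiagram}
    (X : StdTab m n μ) (i : Fin (n - 1)) : ℂ :=
  content q v X ⟨i.val, by have := i.isLt; omega⟩

/-- `c(X|i+2)` (1-based), for `i : Fin (n-1)`. -/
def cHigh {m n : ℕ} (q : ℂ) (v : Fin m → ℂ) {μ : Fin m → YoungDiagram}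
    (X : StdTab m n μ) (i : Fin (n - 1)) : ℂ :=
  content q v X ⟨i.val + 1, by have := i.isLt; omega⟩

/-- The image of the basis vector `𝒳_X` under `ρ_λ(σ_{i+1})`:
`((q−q⁻¹)c(X|i+1)/(c(X|i+1)−c(X|i)))·𝒳_X
  + ((q·c(X|i+1)−q⁻¹·c(X|i))/(c(X|i+1)−c(X|i)))·𝒳_{X^{s_i}}`,
where `𝒳_{X^{s_i}} := 0` if `X^{s_i}` is not standard. -/
def sigmaVec (m n : ℕ) (q : ℂ) (v : Fin m → ℂ) (μ : Fin m → YoungDiagram)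
    (X : StdTab m n μ) (i : Fin (n - 1)) : Uspace m n μ :=
  ((q - q⁻¹) * cHigh q v X i / (cHigh q v X i - cLow q v X i)) • Finsupp.single X 1 +
  ((q * cHigh q v X i - q⁻¹ * cLow q v X i) / (cHigh q v X i - cLow q v X i)) •
    (if h : IsStdTabFun m n μ (swapFun n X.val i) then
        Finsupp.single (⟨swapFun n X.val i, h⟩ : StdTab m n μ) 1
      else 0)

/-- The operator `S_i = ρ_λ(σ_{i+1})` (1-based `σ`, 0-based `i : Fin (n-1)`). -/
def sigmaOp (m n : ℕ) (q : ℂ) (v : Fin m → ℂ) (μ : Fin m → YoungDiagram)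
    (i : Fin (n - 1)) : Module.End ℂ (Uspace m n μ) :=
  Finsupp.lsum ℂ fun X => LinearMap.toSpanSingleton ℂ (Uspace m n μ)
    (sigmaVec m n q v μ X i)

lemma content_congr {m n : ℕ} (q : ℂ) (v : Fin m → ℂ) {μ : Fin m → YoungDiagram}
    (X Y : StdTab m n μ) (i j : Fin n) (h : X.val i = Y.val j) :
    content q v X i = content q v Y j := by
  unfold content; rw [h]

lemma step_std {M : Type*} [AddCommGroup M] [Module ℂ M] (S J : Module.End ℂ M)
    (e f : M) (q c c' : ℂ) (hq : q ≠ 0) (hd : c' - c ≠ 0)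
    (hSe : S e = ((q - q⁻¹) * c' / (c' - c)) • e + ((q * c' - q⁻¹ * c) / (c' - c)) • f)
    (hSf : S f = ((q - q⁻¹) * c / (c - c')) • f + ((q * c - q⁻¹ * c') / (c - c')) • e)
    (hJe : J e = c • e) (hJf : J f = c' • f) :
    S (J (S e)) = c' • e := by
  have hd' : c - c' ≠ 0 := by intro h; exact hd (by linear_combination -h)
  set a := (q - q⁻¹) * c' / (c' - c) with hadef
  set b := (q * c' - q⁻¹ * c) / (c' - c) with hbdef
  set a' := (q - q⁻¹) * c / (c - c') with hadef'
  set b' := (q * c - q⁻¹ * c') / (c - c') with hbdef'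
  have hc1 : a * c * a + b * c' * b' = c' := by
    rw [hadef, hbdef, hbdef']; field_simp; ring
  have hc2 : a * c * b + b * c' * a' = 0 := by
    rw [hadef, hbdef, hadef']; field_simp; ring
  calc S (J (S e)) = S (J (a • e + b • f)) := by rw [hSe]
    _ = S ((a * c) • e + (b * c') • f) := by
        rw [map_add, map_smul, map_smul, hJe, hJf, smul_smul, smul_smul]
    _ = (a * c) • (S e) + (b * c') • (S f) := by rw [map_add, map_smul, map_smul]
    _ = (a * c * a + b * c' * b') • e + (a * c * b + b * c' * a') • f := by
        rw [hSe, hSf]; module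
    _ = c' • e := by rw [hc1, hc2, zero_smul, add_zero]

lemma step_nonstd {M : Type*} [AddCommGroup M] [Module ℂ M] (S J : Module.End ℂ M)
    (e : M) (q c c' : ℂ) (hd : c' - c ≠ 0)
    (ha : ((q - q⁻¹) * c' / (c' - c)) * ((q - q⁻¹) * c' / (c' - c)) =
      (q - q⁻¹) * ((q - q⁻¹) * c' / (c' - c)) + 1)
    (hSe : S e = ((q - q⁻¹) * c' / (c' - c)) • e)
    (hJe : J e = c • e) :
    S (J (S e)) = c' • e := by
  set a := (q - q⁻¹) * c' / (c' - c) with hadef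
  have h2 : a * (c' - c) = (q - q⁻¹) * c' := by rw [hadef]; exact div_mul_cancel₀ _ hd
  have key : a * c * a = c' := by linear_combination c' * ha - a * h2
  rw [hSe, map_smul, hJe, smul_smul, map_smul, hSe, smul_smul, key]

/-- Lemma 4.4.  Under the restrictions on the parameters, in the
representation `V_μ` (i.e. for any algebra homomorphism `ρ : H(m,1,n) → End(U_μ)` with
`ρ(τ) = tauOp` and `ρ(σ_i) = sigmaOp i`), the Jucys–Murphy elements act diagonally:
`ρ(J_i)(𝒳_X) = c(X|i) · 𝒳_X` for every standard `m`-tableau `X` of shape `μ`. -/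
theorem JM_acts_by_contents_on_Vlambda
    (m n : ℕ) (hm : 1 ≤ m) (hn : 1 ≤ n) (q : ℂ) (hq : q ≠ 0) (v : Fin m → ℂ)
    (hres : Restrictions m n q v)
    (μ : Fin m → YoungDiagram) (hμ : ∑ k, (μ k).card = n)
    (ρ : Hecke m n q v →ₐ[ℂ] Module.End ℂ (Uspace m n μ))
    (hρτ : ρ (τgen m n q v) = tauOp m n q v μ)
    (hρσ : ∀ i : Fin (n - 1), ρ (σgen m n q v i) = sigmaOp m n q v μ i) :
    ∀ (X : StdTab m n μ) (i : Fin n),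
      ρ (JM m n q v i) (Finsupp.single X 1) = content q v X i • Finsupp.single X 1 := by
  have hquadH : ∀ i : Fin (n - 1), σgen m n q v i * σgen m n q v i
      = (q - q⁻¹) • σgen m n q v i + 1 := by
    intro i
    have h := RingQuot.mkAlgHom_rel ℂ (Rel.quad (m := m) (q := q) (v := v) i)
    simpa [σgen, map_mul, map_add, map_smul, map_one] using h
  have hSapply : ∀ (X : StdTab m n μ) (i : Fin (n - 1)),
      sigmaOp m n q v μ i (Finsupp.single X 1) = sigmaVec m n q v μ X i := by
    intro X i
    simp [sigmaOp, Finsupp.lsum_single, LinearMap.toSpanSingleton_apply]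
  have hquadS : ∀ (i : Fin (n - 1)) (x : Uspace m n μ),
      sigmaOp m n q v μ i (sigmaOp m n q v μ i x)
        = (q - q⁻¹) • (sigmaOp m n q v μ i x) + x := by
    intro i x
    have h := congrArg ρ (hquadH i)
    rw [map_mul, map_add, map_smul, map_one, hρσ] at h
    calc sigmaOp m n q v μ i (sigmaOp m n q v μ i x)
        = (sigmaOp m n q v μ i * sigmaOp m n q v μ i) x := rfl
      _ = ((q - q⁻¹) • sigmaOp m n q v μ i + 1) x := by rw [h]
      _ = (q - q⁻¹) • (sigmaOp m n q v μ i x) + x := by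
          simp [LinearMap.add_apply, LinearMap.smul_apply]
  suffices H : ∀ (k : ℕ) (hk : k < n) (X : StdTab m n μ),
      ρ (JMn m n q v k) (Finsupp.single X 1)
        = content q v X ⟨k, hk⟩ • Finsupp.single X 1 by
    intro X i
    exact H i.val i.isLt X
  intro k
  induction k with
  | zero =>
    intro hk X
    have h0 : 0 < n := hn
    have htau : tauOp m n q v μ (Finsupp.single X 1)
        = (if h : 0 < n then content q v X ⟨0, h⟩ else 0) • Finsupp.single X 1 := by
      simp [tauOp, Finsupp.lsum_single, LinearMap.toSpanSingleton_apply]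
    rw [show JMn m n q v 0 = τgen m n q v from rfl, hρτ, htau, dif_pos h0]
  | succ k ih =>
    intro hk X
    have hk' : k < n - 1 := by omega
    have hkn : k < n := by omega
    set i : Fin (n - 1) := ⟨k, hk'⟩ with hidef
    have hσN : σN m n q v k = σgen m n q v i := dif_pos hk'
    have hstep : ρ (JMn m n q v (k + 1)) (Finsupp.single X 1)
        = sigmaOp m n q v μ i (ρ (JMn m n q v k)
            (sigmaOp m n q v μ i (Finsupp.single X 1))) := by
      rw [show JMn m n q v (k + 1) = σN m n q v k * JMn m n q v k * σN m n q v k from rfl,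
        hσN, map_mul, map_mul, hρσ i]
      rfl
    rw [hstep]
    by_cases hd : cHigh q v X i - cLow q v X i = 0
    · exfalso
      have hv0 : sigmaVec m n q v μ X i = 0 := by
        unfold sigmaVec
        erw [hd, div_zero, div_zero, zero_smul, zero_smul, add_zero]
      have h := hquadS i (Finsupp.single X 1)
      rw [hSapply X i, hv0, map_zero, smul_zero, zero_add] at h
      simpa using DFunLike.congr_fun h X
    · by_cases hstd : IsStdTabFun m n μ (swapFun n X.val i)
      · set Y : StdTab m n μ := ⟨swapFun n X.val i, hstd⟩ with hYdef
        have hswap1 : Y.val ⟨k, hkn⟩ = X.val ⟨k + 1, hk⟩ := by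
          have h1 : Y.val ⟨k, hkn⟩
              = X.val (Equiv.swap (⟨k, hkn⟩ : Fin n) ⟨k + 1, hk⟩ ⟨k, hkn⟩) := rfl
          rw [h1, Equiv.swap_apply_left]
        have hswap2 : Y.val ⟨k + 1, hk⟩ = X.val ⟨k, hkn⟩ := by
          have h1 : Y.val ⟨k + 1, hk⟩
              = X.val (Equiv.swap (⟨k, hkn⟩ : Fin n) ⟨k + 1, hk⟩ ⟨k + 1, hk⟩) := rfl
          rw [h1, Equiv.swap_apply_right]
        have hclY : cLow q v Y i = cHigh q v X i :=
          content_congr q v Y X ⟨k, hkn⟩ ⟨k + 1, hk⟩ hswap1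
        have hchY : cHigh q v Y i = cLow q v X i :=
          content_congr q v Y X ⟨k + 1, hk⟩ ⟨k, hkn⟩ hswap2
        have hYY : swapFun n Y.val i = X.val := by
          funext j
          show X.val (Equiv.swap _ _ (Equiv.swap _ _ j)) = X.val j
          rw [Equiv.swap_apply_self]
        have hSe : sigmaOp m n q v μ i (Finsupp.single X 1)
            = ((q - q⁻¹) * cHigh q v X i / (cHigh q v X i - cLow q v X i))
                • Finsupp.single X 1
            + ((q * cHigh q v X i - q⁻¹ * cLow q v X i)
                / (cHigh q v X i - cLow q v X i)) • Finsupp.single Y 1 := by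
          rw [hSapply X i]
          unfold sigmaVec
          rw [dif_pos hstd]
          rfl
        have hSf : sigmaOp m n q v μ i (Finsupp.single Y 1)
            = ((q - q⁻¹) * cLow q v X i / (cLow q v X i - cHigh q v X i))
                • Finsupp.single Y 1
            + ((q * cLow q v X i - q⁻¹ * cHigh q v X i)
                / (cLow q v X i - cHigh q v X i)) • Finsupp.single X 1 := by
          rw [hSapply Y i]
          unfold sigmaVec
          rw [hclY, hchY, hYY, dif_pos X.property]
          rfl
        have hJe : ρ (JMn m n q v k) (Finsupp.single X 1)
            = cLow q v X i • Finsupp.single X 1 := ih hkn X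
        have hJf : ρ (JMn m n q v k) (Finsupp.single Y 1)
            = cHigh q v X i • Finsupp.single Y 1 := by
          rw [ih hkn Y]
          rw [show content q v Y ⟨k, hkn⟩ = cHigh q v X i from
            content_congr q v Y X ⟨k, hkn⟩ ⟨k + 1, hk⟩ hswap1]
        exact step_std (sigmaOp m n q v μ i) (ρ (JMn m n q v k))
          (Finsupp.single X 1) (Finsupp.single Y 1) q (cLow q v X i) (cHigh q v X i)
          hq hd hSe hSf hJe hJf
      · have hSe : sigmaOp m n q v μ i (Finsupp.single X 1)
            = ((q - q⁻¹) * cHigh q v X i / (cHigh q v X i - cLow q v X i))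
                • Finsupp.single X 1 := by
          rw [hSapply X i]
          unfold sigmaVec
          erw [dif_neg hstd, smul_zero, add_zero]
        have ha : ((q - q⁻¹) * cHigh q v X i / (cHigh q v X i - cLow q v X i)) *
              ((q - q⁻¹) * cHigh q v X i / (cHigh q v X i - cLow q v X i)) =
            (q - q⁻¹) * ((q - q⁻¹) * cHigh q v X i / (cHigh q v X i - cLow q v X i)) + 1 := by
          have h := hquadS i (Finsupp.single X 1)
          rw [hSe, map_smul, hSe, smul_smul, smul_smul] at h
          have h2 := DFunLike.congr_fun h X
          simpa using h2
        exact step_nonstd (sigmaOp m n q v μ i) (ρ (JMn m n q v k))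
          (Finsupp.single X 1) q (cLow q v X i) (cHigh q v X i) hd ha hSe (ih hkn X)


end CHA
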